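/- With notation as in the previous setting, if q = q⁻ q⁺ where q⁺(D), (1/q⁺)(D) preserve support in [0,∞) and q⁻(D), (1/q⁻)(D) preserve support in (−∞,0], then the truncated operator q(D)₊ := r⁺ q(D) e⁺ on L²(0,∞) factors as q(D)₊ = (r⁺ q⁻(D) e⁺)(r⁺ q⁺(D) e⁺), and hence is invertible with inverse (r⁺ (1/q⁺)(D) e⁺)(r⁺ (1/q⁻)(D) e⁺). -/

import Mathlib

open MeasureTheory

/-- `r⁺`/`e⁺`-truncation on `L²(ℝ)`: restriction to `(0,∞)` followed by extension by zero. -/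
noncomputable def trunc17 (f : Lp ℂ 2 (volume : Measure ℝ)) : Lp ℂ 2 (volume : Measure ℝ) :=
  MeasureTheory.MemLp.toLp ((Set.Ioi (0:ℝ)).indicator f)
    ((MeasureTheory.Lp.memLp f).indicator measurableSet_Ioi)


lemma trunc17_coe (f : Lp ℂ 2 (volume : Measure ℝ)) :
    (trunc17 f : ℝ → ℂ) =ᵐ[volume] (Set.Ioi (0:ℝ)).indicator f :=
  MeasureTheory.MemLp.coeFn_toLp _

lemma ae_ne_zero : ∀ᵐ x : ℝ, x ≠ (0:ℝ) := by
  rw [ae_iff]; simpa using measure_singleton (0:ℝ)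

lemma trunc17_neg_zero (f : Lp ℂ 2 (volume : Measure ℝ)) :
    ∀ᵐ x : ℝ, x < 0 → (trunc17 f) x = 0 := by
  filter_upwards [trunc17_coe f] with x hx hx0
  rw [hx, Set.indicator_of_notMem (by simpa using hx0.le)]

lemma trunc17_eq_self {f : Lp ℂ 2 (volume : Measure ℝ)}
    (h : ∀ᵐ x : ℝ, x < 0 → f x = 0) : trunc17 f = f := by
  refine Lp.ext ?_
  filter_upwards [trunc17_coe f, h, ae_ne_zero] with x hx h0 hne
  rw [hx]
  rcases lt_trichotomy x 0 with h' | h' | h'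
  · rw [Set.indicator_of_notMem (by simpa using h'.le), h0 h']
  · exact absurd h' hne
  · exact Set.indicator_of_mem (Set.mem_Ioi.2 h') _

lemma trunc17_eq_zero {f : Lp ℂ 2 (volume : Measure ℝ)}
    (h : ∀ᵐ x : ℝ, 0 < x → f x = 0) : trunc17 f = 0 := by
  refine Lp.ext ?_
  filter_upwards [trunc17_coe f, h, Lp.coeFn_zero ℂ 2 (volume : Measure ℝ)] with x hx h0 hz
  rw [hx, hz]
  by_cases h' : x ∈ Set.Ioi (0:ℝ)
  · rw [Set.indicator_of_mem h', h0 h']; rfl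
  · rw [Set.indicator_of_notMem h']; rfl

lemma trunc17_sub (f g : Lp ℂ 2 (volume : Measure ℝ)) :
    trunc17 (f - g) = trunc17 f - trunc17 g := by
  refine Lp.ext ?_
  filter_upwards [trunc17_coe (f - g), trunc17_coe f, trunc17_coe g,
    Lp.coeFn_sub f g, Lp.coeFn_sub (trunc17 f) (trunc17 g)] with x h1 h2 h3 h4 h5
  rw [h1, h5, Pi.sub_apply, h2, h3]
  by_cases h' : x ∈ Set.Ioi (0:ℝ)
  · simp only [Set.indicator_of_mem h', h4, Pi.sub_apply]
  · simp [Set.indicator_of_notMem h']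

lemma trunc17_congr {f g : Lp ℂ 2 (volume : Measure ℝ)} (h : f = g) :
    trunc17 f = trunc17 g := by rw [h]

lemma sub_trunc17_pos (f : Lp ℂ 2 (volume : Measure ℝ)) :
    ∀ᵐ x : ℝ, 0 < x → (f - trunc17 f) x = 0 := by
  filter_upwards [trunc17_coe f, Lp.coeFn_sub f (trunc17 f)] with x h1 h2 hx
  rw [h2, Pi.sub_apply, h1, Set.indicator_of_mem (Set.mem_Ioi.2 hx), sub_self]

/-- If `q = q⁻ q⁺`, so that `q(D) = q⁻(D) ∘ q⁺(D)`, where `q⁺(D), (1/q⁺)(D)`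
preserve support in `[0,∞)` and `q⁻(D), (1/q⁻)(D)` preserve support in `(-∞,0]`, then the
truncated operator `q(D)₊ = r⁺ q(D) e⁺` on `L²(0,∞)` factors as
`q(D)₊ = (r⁺q⁻(D)e⁺)(r⁺q⁺(D)e⁺)`, and hence is invertible with inverse
`(r⁺(1/q⁺)(D)e⁺)(r⁺(1/q⁻)(D)e⁺)`. -/
theorem stmt17
    (Tq Tp Sp Tm Sm : Lp ℂ 2 (volume : Measure ℝ) →L[ℂ] Lp ℂ 2 (volume : Measure ℝ))
    (hfact : ∀ f, Tq f = Tm (Tp f))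
    (hTSp : ∀ f, Tp (Sp f) = f) (hSTp : ∀ f, Sp (Tp f) = f)
    (hTSm : ∀ f, Tm (Sm f) = f) (hSTm : ∀ f, Sm (Tm f) = f)
    (hTp : ∀ f : Lp ℂ 2 (volume : Measure ℝ),
      (∀ᵐ x : ℝ, x < 0 → f x = 0) → (∀ᵐ x : ℝ, x < 0 → (Tp f) x = 0))
    (hSp : ∀ f : Lp ℂ 2 (volume : Measure ℝ),
      (∀ᵐ x : ℝ, x < 0 → f x = 0) → (∀ᵐ x : ℝ, x < 0 → (Sp f) x = 0))
    (hTm : ∀ f : Lp ℂ 2 (volume : Measure ℝ),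
      (∀ᵐ x : ℝ, 0 < x → f x = 0) → (∀ᵐ x : ℝ, 0 < x → (Tm f) x = 0))
    (hSm : ∀ f : Lp ℂ 2 (volume : Measure ℝ),
      (∀ᵐ x : ℝ, 0 < x → f x = 0) → (∀ᵐ x : ℝ, 0 < x → (Sm f) x = 0)) :
    ∀ f : Lp ℂ 2 (volume : Measure ℝ),
      trunc17 (Tq (trunc17 f)) = trunc17 (Tm (trunc17 (Tp (trunc17 f)))) ∧
      trunc17 (Sp (trunc17 (Sm (trunc17 (Tq (trunc17 f)))))) = trunc17 f ∧
      trunc17 (Tq (trunc17 (Sp (trunc17 (Sm (trunc17 f)))))) = trunc17 f := by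
  intro f
  set g := trunc17 f with hgdef
  have hgneg : ∀ᵐ x : ℝ, x < 0 → g x = 0 := trunc17_neg_zero f
  have hg : trunc17 g = g := trunc17_eq_self hgneg
  have hhneg : ∀ᵐ x : ℝ, x < 0 → (Tp g) x = 0 := hTp g hgneg
  have hTpg : trunc17 (Tp g) = Tp g := trunc17_eq_self hhneg
  refine ⟨?_, ?_, ?_⟩
  · rw [hfact g, hTpg]
  · set w := Tm (Tp g) with hwdef
    have key : trunc17 (Sm (trunc17 w)) = Tp g := by
      have e1 : Sm (trunc17 w) = Sm w - Sm (w - trunc17 w) := by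
        rw [← map_sub, sub_sub_cancel]
      rw [e1, trunc17_sub, hwdef, hSTm, hTpg,
        trunc17_eq_zero (hSm _ (sub_trunc17_pos w)), sub_zero]
    rw [hfact g, ← hwdef, key, hSTp, hg]
  · set u := Sm g with hudef
    have hSpu : ∀ᵐ x : ℝ, x < 0 → (Sp (trunc17 u)) x = 0 :=
      hSp _ (trunc17_neg_zero u)
    rw [trunc17_eq_self hSpu, hfact, hTSp]
    have e1 : Tm (trunc17 u) = Tm u - Tm (u - trunc17 u) := by
      rw [← map_sub, sub_sub_cancel]
    rw [e1, trunc17_sub, hudef, hTSm,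
      trunc17_eq_zero (hTm _ (sub_trunc17_pos u)), sub_zero, hg]
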